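/- Let R be a subdirectly irreducible BL-ring. Then every ideal of R is either an annihilator ideal (I = J* for some ideal J) or a dense ideal (I* = 0). -/

import Mathlib

/-- Membership in the annihilator of a principal ideal. -/
private lemma mem_ann_span {R : Type*} [CommRing R] {a x : R} :
    x ∈ (Ideal.span {a} : Ideal R).annihilator ↔ x * a = 0 := by
  rw [Submodule.mem_annihilator]
  constructor
  · intro h
    have := h a (Ideal.mem_span_singleton_self a)
    rwa [smul_eq_mul] at this
  · intro h p hp
    obtain ⟨c, hc⟩ := Ideal.mem_span_singleton'.mp hp
    rw [smul_eq_mul, ← hc]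
    linear_combination c * h

/-- In a ring with an "atom element" z (a nonzero element contained in every nonzero
principal ideal), any element not annihilating z is regular. -/
private lemma regular_of_atom {R : Type*} [CommRing R] {z : R}
    (hminx : ∀ x : R, x ≠ 0 → z ∈ Ideal.span {x}) {e : R} (hez : e * z ≠ 0) :
    ∀ x : R, e * x = 0 → x = 0 := by
  intro x hx
  by_contra hx0
  obtain ⟨a, ha⟩ := Ideal.mem_span_singleton'.mp (hminx x hx0)
  -- ha : a * x = z
  exact hez (by linear_combination (-e) * ha + a * hx)

/-- Key lemma: no element w with z * w = 0 and w not nilpotent can exist. -/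
private lemma noPrufer {R : Type*} [CommRing R]
    (h1 : ∀ I J : Ideal R, I ⊓ J = I * (J.colon I))
    (h2 : ∀ I J : Ideal R, J.colon I + I.colon J = ⊤)
    (z : R) (hz : z ≠ 0)
    (hminx : ∀ x : R, x ≠ 0 → z ∈ Ideal.span {x})
    (w : R) (hzw : z * w = 0) (hw : ∀ n : ℕ, w ^ (n + 1) ≠ 0) : False := by
  -- the ideal of elements killed by some power of w
  set Q : Ideal R :=
    { carrier := {x | ∃ n : ℕ, x * w ^ n = 0}
      add_mem' := by
        rintro a b ⟨na, hna⟩ ⟨nb, hnb⟩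
        exact ⟨na + nb, by rw [pow_add]; linear_combination w ^ nb * hna + w ^ na * hnb⟩
      zero_mem' := ⟨0, by simp⟩
      smul_mem' := by
        rintro c x ⟨n, hn⟩
        exact ⟨n, by rw [smul_eq_mul]; linear_combination c * hn⟩ } with hQdef
  have hmemQ : ∀ x : R, x ∈ Q ↔ ∃ n : ℕ, x * w ^ n = 0 := fun x => Iff.rfl
  have hzQ : z ∈ Q := ⟨1, by rwa [pow_one]⟩
  have hZQ : Ideal.span {z} ≤ Q := by
    rw [Ideal.span_le]; simpa using hzQ
  -- h1 applied to (Q, span z):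
  have hQT : Ideal.span {z} = Q * ((Ideal.span {z}).colon Q) := by
    have := h1 Q (Ideal.span {z})
    rwa [inf_eq_right.mpr hZQ] at this
  set T := (Ideal.span {z}).colon Q with hTdef
  -- find q ∈ Q, t ∈ T with q * t ≠ 0
  have hne : ∃ q ∈ Q, ∃ t ∈ T, q * t ≠ 0 := by
    by_contra h
    push_neg at h
    have hle : Q * T ≤ ⊥ := Ideal.mul_le.mpr fun q hq t ht => by
      rw [Submodule.mem_bot]; exact h q hq t ht
    rw [← hQT, le_bot_iff, Ideal.span_singleton_eq_bot] at hle
    exact hz hle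
  obtain ⟨q, hq, t, ht, hqt⟩ := hne
  obtain ⟨n, hqn⟩ := (hmemQ q).mp hq
  set Cq := (Ideal.span {w ^ n} : Ideal R).annihilator with hCqdef
  have hqC : q ∈ Cq := mem_ann_span.mpr hqn
  -- the colon of Cq by (w) is the annihilator of w^(n+1)
  have hcolon : Cq.colon (Ideal.span {w}) = (Ideal.span {w ^ (n + 1)} : Ideal R).annihilator := by
    ext x
    rw [← Ideal.submodule_span_eq, Submodule.mem_colon_span_singleton, smul_eq_mul,
      mem_ann_span, mem_ann_span, pow_succ]
    constructor
    · intro h; linear_combination h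
    · intro h; linear_combination h
  -- h2 applied to (span w, Cq)
  obtain ⟨e, he, f, hf, hef⟩ :
      ∃ e ∈ Cq.colon (Ideal.span {w}), ∃ f ∈ (Ideal.span {w}).colon Cq, e + f = 1 := by
    have h := h2 (Ideal.span {w}) Cq
    rw [Submodule.add_eq_sup] at h
    have : (1 : R) ∈ Cq.colon (Ideal.span {w}) ⊔ (Ideal.span {w}).colon Cq := by
      rw [h]; trivial
    exact Submodule.mem_sup.mp this
  have hew : e * w ^ (n + 1) = 0 := by
    rw [hcolon] at he
    exact mem_ann_span.mp he
  -- q * f ∈ (w) ⊓ Cq = (w) * (Cq : (w))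
  have hqf : q * f ∈ Ideal.span {w} ⊓ Cq := by
    constructor
    · have := Submodule.mem_colon.mp hf q hqC
      rwa [smul_eq_mul, mul_comm] at this
    · exact Ideal.mul_mem_right f _ hqC
  rw [h1 (Ideal.span {w}) Cq] at hqf
  obtain ⟨c, hc, hwc⟩ := Ideal.mem_span_singleton_mul.mp hqf
  -- hwc : w * c = q * f,  hc : c ∈ Cq.colon (span w)
  have hcQ : c ∈ Q := by
    rw [hcolon] at hc
    exact (hmemQ c).mpr ⟨n + 1, mem_ann_span.mp hc⟩
  obtain ⟨r, hr⟩ : ∃ r, r * z = t * c := by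
    have := Submodule.mem_colon.mp ht c hcQ
    rw [smul_eq_mul] at this
    exact Ideal.mem_span_singleton'.mp this
  have hqtf : q * t * f = 0 := by
    linear_combination (-t) * hwc - w * hr + r * hzw
  have hze' : q * t = q * t * e := by
    linear_combination hqtf - (q * t) * hef
  obtain ⟨c₀, hc₀⟩ : ∃ c₀, c₀ * z = t * q := by
    have := Submodule.mem_colon.mp ht q hq
    rw [smul_eq_mul] at this
    exact Ideal.mem_span_singleton'.mp this
  have hez : e * z ≠ 0 := by
    intro h0
    apply hqt
    rw [hze']
    linear_combination (-e) * hc₀ + c₀ * h0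
  exact hw n (regular_of_atom hminx hez _ hew)

/-- In a subdirectly irreducible BL-ring, every ideal is either an annihilator
ideal (`I = J*` for some ideal `J`) or a dense ideal (`I* = 0`). -/
theorem stmt_15 {R : Type*} [CommRing R]
    (h1 : ∀ I J : Ideal R, I ⊓ J = I * (J.colon I))
    (h2 : ∀ I J : Ideal R, J.colon I + I.colon J = ⊤)
    (hsi : ∃ M : Ideal R, M ≠ ⊥ ∧ ∀ N : Ideal R, N ≠ ⊥ → M ≤ N) :
    ∀ I : Ideal R, (∃ J : Ideal R, I = J.annihilator) ∨ I.annihilator = ⊥ := by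
  classical
  obtain ⟨M, hM, hmin⟩ := hsi
  obtain ⟨z, hzM, hz⟩ := (Submodule.ne_bot_iff M).mp hM
  -- z is in every nonzero principal ideal
  have hminx : ∀ x : R, x ≠ 0 → z ∈ Ideal.span {x} := by
    intro x hx
    have : Ideal.span {x} ≠ ⊥ := fun h => hx (Ideal.span_singleton_eq_bot.mp h)
    exact hmin _ this hzM
  -- z is in every nonzero ideal
  have hminN : ∀ N : Ideal R, N ≠ ⊥ → z ∈ N := by
    intro N hN
    obtain ⟨x, hxN, hx⟩ := (Submodule.ne_bot_iff N).mp hN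
    have : Ideal.span {x} ≤ N := by rw [Ideal.span_le]; simpa using hxN
    exact this (hminx x hx)
  intro I
  left
  refine ⟨I.annihilator, le_antisymm ?_ ?_⟩
  · -- I ≤ ann (ann I)
    intro x hx
    rw [Submodule.mem_annihilator]
    intro a ha
    have := Submodule.mem_annihilator.mp ha x hx
    rw [smul_eq_mul] at this ⊢
    linear_combination this
  · -- ann (ann I) ≤ I : the hard direction
    intro y hy
    by_contra hyI
    have hy0 : y ≠ 0 := fun h0 => hyI (h0 ▸ I.zero_mem)
    set D := I.colon (Ideal.span {y}) with hDdef
    -- h2 applied to (span y, I)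
    obtain ⟨u, hu, v, hv, huv⟩ :
        ∃ u ∈ I.colon (Ideal.span {y}), ∃ v ∈ (Ideal.span {y}).colon I, u + v = 1 := by
      have h := h2 (Ideal.span {y}) I
      rw [Submodule.add_eq_sup] at h
      have : (1 : R) ∈ I.colon (Ideal.span {y}) ⊔ (Ideal.span {y}).colon I := by
        rw [h]; trivial
      exact Submodule.mem_sup.mp this
    -- Step 1: anything of the form t*y in ann D is zero
    have step1 : ∀ t : R, t * y ∈ D.annihilator → t * y = 0 := by
      intro t ht
      have hsu : t * y * u = 0 := by
        have := Submodule.mem_annihilator.mp ht u hu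
        rwa [smul_eq_mul] at this
      have htv : t * v ∈ I.annihilator := by
        rw [Submodule.mem_annihilator]
        intro i hi
        rw [smul_eq_mul]
        have hvi : v * i ∈ Ideal.span {y} ⊓ I := by
          constructor
          · have := Submodule.mem_colon.mp hv i hi
            rwa [smul_eq_mul] at this
          · exact Ideal.mul_mem_left I v hi
        rw [h1 (Ideal.span {y}) I] at hvi
        obtain ⟨d, hd, hyd⟩ := Ideal.mem_span_singleton_mul.mp hvi
        -- hyd : y * d = v * i,  hd : d ∈ I.colon (span y) = D
        have hsd : t * y * d = 0 := by
          have := Submodule.mem_annihilator.mp ht d hd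
          rwa [smul_eq_mul] at this
        linear_combination (-t) * hyd + hsd
      have hsv : t * y * v = 0 := by
        have := Submodule.mem_annihilator.mp hy (t * v) htv
        rw [smul_eq_mul] at this
        linear_combination this
      linear_combination hsu + hsv - (t * y) * huv
    -- Step 2+3: ann D = ⊥
    have hB : D.annihilator = ⊥ := by
      by_contra hBne
      have hzB : z ∈ D.annihilator := hminN _ hBne
      have hzy : z ∈ Ideal.span {y} := hminx y hy0
      have hmem : z ∈ Ideal.span {y} ⊓ D.annihilator := ⟨hzy, hzB⟩
      rw [h1 (Ideal.span {y}) D.annihilator] at hmem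
      obtain ⟨b, hb, hyb⟩ := Ideal.mem_span_singleton_mul.mp hmem
      -- hyb : y * b = z,  hb : b ∈ (ann D).colon (span y)
      have hby : b * y ∈ D.annihilator := by
        have := Submodule.mem_colon.mp hb y (Ideal.mem_span_singleton_self y)
        rwa [smul_eq_mul] at this
      have : b * y = 0 := step1 b hby
      exact hz (by linear_combination -hyb + this)
    -- Step 4: (z) * D ≠ ⊥, so z = z * δ for some δ ∈ D
    have hZD : Ideal.span {z} * D ≠ ⊥ := by
      intro h0
      have hzB : z ∈ D.annihilator := by
        rw [Submodule.mem_annihilator]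
        intro d hd
        rw [smul_eq_mul]
        have : z * d ∈ Ideal.span {z} * D :=
          Ideal.mul_mem_mul (Ideal.mem_span_singleton_self z) hd
        rw [h0] at this
        simpa using this
      rw [hB] at hzB
      exact hz (by simpa using hzB)
    obtain ⟨δ, hδ, hzδ⟩ := Ideal.mem_span_singleton_mul.mp (hminN _ hZD)
    -- hzδ : z * δ = z
    set w := 1 - δ with hwdef
    have hzw : z * w = 0 := by rw [hwdef]; linear_combination -hzδ
    by_cases hwn : ∃ n : ℕ, w ^ (n + 1) = 0
    · -- w nilpotent ⟹ 1 ∈ D ⟹ y ∈ I, contradiction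
      obtain ⟨n, hn⟩ := hwn
      have hgeom : δ * (∑ i ∈ Finset.range (n + 1), w ^ i) = 1 := by
        have h := geom_sum_mul w (n + 1)
        rw [hn] at h
        rw [hwdef]
        linear_combination -h
      have h1D : (1 : R) ∈ D := hgeom ▸ Ideal.mul_mem_right _ _ hδ
      apply hyI
      have := Submodule.mem_colon.mp h1D y (Ideal.mem_span_singleton_self y)
      rwa [smul_eq_mul, one_mul] at this
    · push_neg at hwn
      exact noPrufer h1 h2 z hz hminx w hzw hwn
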